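/- Let G be a group, N ⊲ G, Q = G/N. Suppose Q is HNN-free (equivalently: for all K ≤ Q and q ∈ Q, K^q ≤ K implies K^q = K). If for every g ∈ G and every subgroup H ≤ N, H^g ≤ H implies H^g = H, then G has the same property: for every K ≤ G and g ∈ G, K^g ≤ K implies K^g = K. -/

import Mathlib

/-- The conjugate `K^g = g⁻¹ K g` of a subgroup. -/
def conjSub {G : Type*} [Group G] (g : G) (K : Subgroup G) : Subgroup G :=
  K.map (MulAut.conj g⁻¹).toMonoidHom

lemma mem_conjSub {G : Type*} [Group G] {g x : G} {K : Subgroup G} :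
    x ∈ conjSub g K ↔ g * x * g⁻¹ ∈ K := by
  simp only [conjSub, Subgroup.mem_map, MulEquiv.coe_toMonoidHom, MulAut.conj_apply]
  constructor
  · rintro ⟨k, hk, rfl⟩
    simpa [mul_assoc] using hk
  · intro h
    exact ⟨g * x * g⁻¹, h, by group⟩

lemma conjSub_map {G G' : Type*} [Group G] [Group G'] (f : G →* G') (g : G)
    (K : Subgroup G) : (conjSub g K).map f = conjSub (f g) (K.map f) := by
  ext x
  simp only [Subgroup.mem_map, mem_conjSub]
  constructor
  · rintro ⟨y, hy, rfl⟩
    exact ⟨g * y * g⁻¹, hy, by simp [map_mul, map_inv, mul_assoc]⟩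
  · rintro ⟨k, hk, hkeq⟩
    refine ⟨g⁻¹ * k * g, by simpa [mul_assoc] using hk, ?_⟩
    simp only [map_mul, map_inv] at hkeq ⊢
    rw [hkeq]; group

/-- Lemma 4.2 ((b) ⇒ (a)): let `N ⊲ G` and `Q = G/N`.  If `Q` is HNN-free
(`K^q ≤ K → K^q = K` for subgroups of `Q`) and `H^g ≤ H → H^g = H` for all subgroups
`H ≤ N` and `g ∈ G`, then `G` is HNN-free: `K^g ≤ K → K^g = K` for all `K ≤ G`. -/
theorem stmt15 {G : Type*} [Group G] (N : Subgroup G) [N.Normal]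
    (hQ : ∀ (K : Subgroup (G ⧸ N)) (q : G ⧸ N), conjSub q K ≤ K → conjSub q K = K)
    (hN : ∀ (g : G) (H : Subgroup G), H ≤ N → conjSub g H ≤ H → conjSub g H = H) :
    ∀ (K : Subgroup G) (g : G), conjSub g K ≤ K → conjSub g K = K := by
  intro K g hle
  set π := QuotientGroup.mk' N with hπ
  -- quotient level
  have hQeq : conjSub (π g) (K.map π) = K.map π :=
    hQ (K.map π) (π g) (by rw [← conjSub_map]; exact Subgroup.map_mono hle)
  -- intersection with N
  have hHle : conjSub g (K ⊓ N) ≤ K ⊓ N := by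
    intro x hx
    rw [mem_conjSub] at hx
    obtain ⟨h1, h2⟩ := hx
    refine ⟨hle (mem_conjSub.2 h1), ?_⟩
    have := Subgroup.Normal.conj_mem ‹N.Normal› _ h2 g⁻¹
    simpa [mul_assoc] using this
  have hHeq := hN g (K ⊓ N) inf_le_right hHle
  refine le_antisymm hle ?_
  intro k hk
  rw [mem_conjSub]
  have h1 : π (g * k * g⁻¹) ∈ K.map π := by
    have hk' : (π k : G ⧸ N) ∈ conjSub (π g) (K.map π) :=
      hQeq.symm ▸ Subgroup.mem_map_of_mem π hk
    rw [mem_conjSub] at hk'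
    simpa [map_mul, map_inv] using hk'
  obtain ⟨k', hk', hk'eq⟩ := h1
  have hn : k'⁻¹ * (g * k * g⁻¹) ∈ N := by
    rw [← QuotientGroup.eq]
    exact hk'eq
  have hk'K : g⁻¹ * k' * g ∈ K := hle (mem_conjSub.2 (by simpa [mul_assoc] using hk'))
  have h2 : g⁻¹ * (k'⁻¹ * (g * k * g⁻¹)) * g ∈ K := by
    have he : g⁻¹ * (k'⁻¹ * (g * k * g⁻¹)) * g = (g⁻¹ * k' * g)⁻¹ * k := by group
    rw [he]
    exact mul_mem (inv_mem hk'K) hk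
  have h3 : g⁻¹ * (k'⁻¹ * (g * k * g⁻¹)) * g ∈ N := by
    have := Subgroup.Normal.conj_mem ‹N.Normal› _ hn g⁻¹
    simpa [mul_assoc] using this
  have h4 : g⁻¹ * (k'⁻¹ * (g * k * g⁻¹)) * g ∈ conjSub g (K ⊓ N) :=
    hHeq.symm ▸ (Subgroup.mem_inf.2 ⟨h2, h3⟩)
  rw [mem_conjSub] at h4
  have h5 : k'⁻¹ * (g * k * g⁻¹) ∈ K ⊓ N := by
    have he : g * (g⁻¹ * (k'⁻¹ * (g * k * g⁻¹)) * g) * g⁻¹ = k'⁻¹ * (g * k * g⁻¹) := by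
      group
    rwa [he] at h4
  have he : g * k * g⁻¹ = k' * (k'⁻¹ * (g * k * g⁻¹)) := by group
  rw [he]
  exact mul_mem hk' h5.1
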